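/- Let (X, ‖·‖) be a Banach space, let T : X → X be a (k, a)-enriched Kannan mapping with k ∈ [0, ∞) and a ∈ [0, 1/2), let λ = 1/(k+1), let p be the unique fixed point of T, and let (xₙ) be the Krasnoselskij iteration xₙ₊₁ = (1−λ)xₙ + λT xₙ with arbitrary x₀ ∈ X. Then, with δ = a/(1−a), the a posteriori error estimate ‖xₙ − p‖ ≤ (δ/(1−δ))·‖xₙ − xₙ₋₁‖ holds for all n ≥ 1. -/

import Mathlib

/-- A posteriori error estimate for the Krasnoselskij iteration associated to a
`(k, a)`-enriched Kannan mapping: with `δ = a/(1−a)`,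
`‖xₙ − p‖ ≤ (δ/(1−δ))·‖xₙ − xₙ₋₁‖` for all `n ≥ 1`. -/
theorem enrichedKannan_krasnoselskij_aposteriori_estimate
    {X : Type*} [NormedAddCommGroup X] [NormedSpace ℝ X] [CompleteSpace X]
    (T : X → X) (k a : ℝ) (hk : 0 ≤ k) (ha0 : 0 ≤ a) (ha : a < 1 / 2)
    (hT : ∀ x y : X, ‖k • (x - y) + (T x - T y)‖ ≤ a * (‖x - T x‖ + ‖y - T y‖))
    (p : X) (hp : T p = p) (hpu : ∀ q : X, T q = q → q = p)
    (x : ℕ → X)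
    (hx : ∀ n : ℕ, x (n + 1) = (1 - 1 / (k + 1)) • x n + (1 / (k + 1)) • T (x n)) :
    ∀ n : ℕ, 1 ≤ n →
      ‖x n - p‖ ≤ (a / (1 - a)) / (1 - a / (1 - a)) * ‖x n - x (n - 1)‖ := by
  intro n hn
  obtain ⟨m, rfl⟩ : ∃ m, n = m + 1 := ⟨n - 1, (Nat.succ_pred_eq_of_pos hn).symm⟩
  simp only [Nat.add_sub_cancel]
  have hk1 : (0:ℝ) < k + 1 := by linarith
  have hLk : 1 - 1/(k+1) = (1/(k+1)) * k := by field_simp; ring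
  have key : x (m+1) - p = (1/(k+1)) • (k • (x m - p) + (T (x m) - p)) := by
    rw [hx, hLk]
    match_scalars <;> field_simp <;> ring
  have key2 : x (m+1) - x m = (1/(k+1)) • (T (x m) - x m) := by
    rw [hx]; module
  have hL0 : (0:ℝ) ≤ 1/(k+1) := by positivity
  have h1 : ‖x (m+1) - p‖ ≤ (1/(k+1)) * (a * ‖x m - T (x m)‖) := by
    rw [key, norm_smul, Real.norm_of_nonneg hL0]
    have := hT (x m) p
    rw [hp] at this
    simp at this
    exact mul_le_mul_of_nonneg_left this hL0
  have h2 : ‖x m - T (x m)‖ = (k+1) * ‖x (m+1) - x m‖ := by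
    rw [key2, norm_smul, Real.norm_of_nonneg hL0, ← norm_neg (T (x m) - x m)]
    simp [neg_sub]
    field_simp
  have h3 : ‖x (m+1) - p‖ ≤ a * ‖x (m+1) - x m‖ := by
    calc ‖x (m+1) - p‖ ≤ (1/(k+1)) * (a * ((k+1) * ‖x (m+1) - x m‖)) := by
          rw [← h2]; exact h1
      _ = a * ‖x (m+1) - x m‖ := by field_simp
  have h12 : (0:ℝ) < 1 - 2*a := by linarith
  have h1a : (0:ℝ) < 1 - a := by linarith
  have hd : (a / (1 - a)) / (1 - a / (1 - a)) = a / (1 - 2*a) := by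
    rw [show (1:ℝ) - a/(1-a) = (1-2*a)/(1-a) by field_simp; ring]
    field_simp
  have h4 : a ≤ a / (1 - 2*a) := by
    rw [le_div_iff₀ h12]; nlinarith
  rw [hd]
  calc ‖x (m+1) - p‖ ≤ a * ‖x (m+1) - x m‖ := h3
    _ ≤ (a / (1 - 2*a)) * ‖x (m+1) - x m‖ :=
        mul_le_mul_of_nonneg_right h4 (norm_nonneg _)
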